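/- Let R be a commutative ring, φ : R → R a flat ring endomorphism, π ∈ R, and M an étale φ-module over R (finite R-module with isomorphic linearization R ⊗_{φ,R} M ≅ M). Let M[π^∞] be the submodule of π-power torsion elements. Then M/M[π^∞] is an étale φ-module over R which is π-torsion free. -/

import Mathlib

open TensorProduct

/-- Type synonym: `M` with the `R`-module structure twisted by `φ` (i.e. `r • m = φ r • m`).
For `M = R` this is "`R` viewed as an `R`-module via `φ`". -/
@[nolint unusedArguments]
def Twist (R : Type*) [CommRing R] (φ : R →+* R) (M : Type*) [AddCommGroup M] [Module R M] :
    Type _ := M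

namespace Twist

variable {R : Type*} [CommRing R] (φ : R →+* R) {M : Type*} [AddCommGroup M] [Module R M]

instance : AddCommGroup (Twist R φ M) := inferInstanceAs (AddCommGroup M)

instance : Module R (Twist R φ M) := Module.compHom M φ

theorem smul_def (r : R) (m : M) :
    (r • (show Twist R φ M from m)) = (show Twist R φ M from (φ r • m)) := rfl

end Twist

/-- The linearization `R ⊗_{φ,R} M → M`, `x ⊗ m ↦ x • φM m`, of a `φ`-semilinear map
`φM : M → M`.  It is `R`-linear when the left tensor factor and the target carry the
`φ`-twisted module structures.  An étale `φ`-module is a finite module `M` for which this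
map is bijective. -/
noncomputable def linearization {R : Type*} [CommRing R] (φ : R →+* R)
    {M : Type*} [AddCommGroup M] [Module R M] (φM : M →ₛₗ[φ] M) :
    TensorProduct R (Twist R φ R) M →ₗ[R] Twist R φ M :=
  TensorProduct.lift
    { toFun := fun x =>
        { toFun := fun m => show Twist R φ M from (show R from x) • φM m
          map_add' := fun a b => by
            show ((show R from x) • φM (a + b) : M) = (show R from x) • φM a + (show R from x) • φM b
            rw [map_add]
            exact smul_add (show R from x) (φM a) (φM b)
          map_smul' := fun r m => by
            show ((show R from x) • φM (r • m) : M) = φ r • ((show R from x) • φM m)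
            rw [LinearMap.map_smulₛₗ, smul_comm] }
      map_add' := fun x y => by
        ext m
        show ((show R from x) + (show R from y)) • φM m = (show R from x) • φM m + (show R from y) • φM m
        exact add_smul _ _ _
      map_smul' := fun r x => by
        ext m
        show (φ r * (show R from x)) • φM m = (φ r • ((show R from x) • φM m) : M)
        exact mul_smul _ _ _ }

/-- Let `R` be a commutative ring, `φ` a flat endomorphism fixing `π`, and
`M` an étale `φ`-module over `R`.  Let `M[π^∞] = ⋃_n M[π^n]` be the `π`-power torsion
submodule.  Then `M/M[π^∞]` is a `π`-torsion-free étale `φ`-module: the quotient has no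
`π`-torsion, and any semilinear endomorphism of it induced from `φM` is finite with bijective
linearization. -/
theorem statement_3 {R : Type*} [CommRing R] (φ : R →+* R)
    (hflat : Module.Flat R (Twist R φ R))
    {M : Type*} [AddCommGroup M] [Module R M] [Module.Finite R M]
    (φM : M →ₛₗ[φ] M)
    (hetale : Function.Bijective (linearization φ φM))
    (π : R) (hπ : φ π = π)
    (Mtor : Submodule R M)
    (hMtor : Mtor = ⨆ n : ℕ, Submodule.torsionBy R M (π ^ n)) :
    (∀ x : M ⧸ Mtor, π • x = 0 → x = 0) ∧
    ∀ ψ : (M ⧸ Mtor) →ₛₗ[φ] (M ⧸ Mtor),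
      (∀ m : M, ψ (Submodule.Quotient.mk m) = Submodule.Quotient.mk (φM m)) →
      Module.Finite R (M ⧸ Mtor) ∧ Function.Bijective (linearization φ ψ) := by
  
  haveI := hflat
  have hmem : ∀ x : M, x ∈ Mtor ↔ ∃ n : ℕ, π ^ n • x = 0 := by
    intro x
    rw [hMtor]
    constructor
    · intro hx
      have hdir : Directed (· ≤ ·) (fun n : ℕ => Submodule.torsionBy R M (π ^ n)) := by
        apply Monotone.directed_le
        intro a b hab y hy
        rw [Submodule.mem_torsionBy_iff] at *
        obtain ⟨c, rfl⟩ := Nat.exists_eq_add_of_le hab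
        rw [pow_add, mul_comm, mul_smul, hy, smul_zero]
      rw [Submodule.mem_iSup_of_directed _ hdir] at hx
      obtain ⟨n, hn⟩ := hx
      exact ⟨n, (Submodule.mem_torsionBy_iff _ _).1 hn⟩
    · rintro ⟨n, hn⟩
      exact Submodule.mem_iSup_of_mem n ((Submodule.mem_torsionBy_iff _ _).2 hn)
  have hfree : ∀ x : M ⧸ Mtor, π • x = 0 → x = 0 := by
    intro x hx
    obtain ⟨m, rfl⟩ := Submodule.Quotient.mk_surjective Mtor x
    rw [← Submodule.Quotient.mk_smul, Submodule.Quotient.mk_eq_zero] at hx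
    rw [Submodule.Quotient.mk_eq_zero]
    obtain ⟨n, hn⟩ := (hmem _).1 hx
    refine (hmem m).2 ⟨n + 1, ?_⟩
    rw [pow_succ, mul_smul]
    exact hn
  refine ⟨hfree, fun ψ hψ => ?_⟩
  have hfin : Module.Finite R (M ⧸ Mtor) :=
    Module.Finite.of_surjective Mtor.mkQ (Submodule.mkQ_surjective Mtor)
  have hcomm : ∀ w : TensorProduct R (Twist R φ R) M,
      (linearization φ ψ (LinearMap.lTensor (Twist R φ R) Mtor.mkQ w) : M ⧸ Mtor)
        = Mtor.mkQ (linearization φ φM w) := by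
    intro w
    induction w using TensorProduct.induction_on with
    | zero => simp; exact (map_zero Mtor.mkQ).symm
    | tmul x m =>
        show (show R from x) • ψ (Mtor.mkQ m) = Mtor.mkQ ((show R from x) • φM m)
        rw [Submodule.mkQ_apply, hψ, map_smul, Submodule.mkQ_apply]
    | add a b ha hb =>
        simp only [map_add, ha, hb]
        exact (map_add Mtor.mkQ _ _).symm
  have hfreen : ∀ (n : ℕ) (x : M ⧸ Mtor), π ^ n • x = 0 → x = 0 := by
    intro n
    induction n with
    | zero => intro x hx; simpa using hx
    | succ n ih =>
        intro x hx
        rw [pow_succ, mul_smul] at hx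
        exact hfree x (ih _ hx)
  have hπinj : Function.Injective (LinearMap.lsmul R (M ⧸ Mtor) π) := by
    intro a b h
    have h2 : π • (a - b) = 0 := by
      rw [smul_sub, sub_eq_zero]
      exact h
    exact sub_eq_zero.mp (hfree _ h2)
  have hginj : Function.Injective
      (LinearMap.lTensor (Twist R φ R) (LinearMap.lsmul R (M ⧸ Mtor) π)) :=
    Module.Flat.lTensor_preserves_injective_linearMap _ hπinj
  have hsmul : ∀ z : TensorProduct R (Twist R φ R) (M ⧸ Mtor),
      LinearMap.lTensor (Twist R φ R) (LinearMap.lsmul R (M ⧸ Mtor) π) z = π • z := by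
    intro z
    induction z using TensorProduct.induction_on with
    | zero => simp
    | tmul x m =>
        rw [LinearMap.lTensor_tmul, LinearMap.lsmul_apply, ← TensorProduct.smul_tmul,
          ← TensorProduct.smul_tmul']
    | add a b ha hb => rw [map_add, ha, hb, smul_add]
  have htinj : ∀ z : TensorProduct R (Twist R φ R) (M ⧸ Mtor), π • z = 0 → z = 0 := by
    intro z hz
    apply hginj
    rw [hsmul, hz, map_zero]
  have htpow : ∀ (n : ℕ) (z : TensorProduct R (Twist R φ R) (M ⧸ Mtor)),
      π ^ n • z = 0 → z = 0 := by
    intro n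
    induction n with
    | zero => intro z hz; simpa using hz
    | succ n ih =>
        intro z hz
        rw [pow_succ, mul_smul] at hz
        exact htinj z (ih _ hz)
  have hker : ∀ z, linearization φ ψ z = 0 → z = 0 := by
    intro z hz
    obtain ⟨w, rfl⟩ := LinearMap.lTensor_surjective (Twist R φ R)
      (Submodule.mkQ_surjective Mtor) z
    have h1 : Mtor.mkQ (linearization φ φM w) = 0 := by
      rw [← hcomm]
      exact hz
    replace h1 := (Submodule.Quotient.mk_eq_zero Mtor (x := (show M from linearization φ φM w))).1 h1
    obtain ⟨n, hn⟩ := (hmem _).1 h1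
    have h2 : linearization φ φM (π ^ n • w) = 0 := by
      rw [map_smul]
      change φ (π ^ n) • (show M from linearization φ φM w) = 0
      rw [map_pow, hπ]
      exact hn
    have h3 : π ^ n • w = 0 := by
      apply hetale.1
      rw [h2, map_zero]
    have h4 : π ^ n • LinearMap.lTensor (Twist R φ R) Mtor.mkQ w = 0 := by
      rw [← map_smul, h3, map_zero]
    exact htpow n _ h4
  refine ⟨hfin, ?_, ?_⟩
  · intro a b h
    have hab : a - b = 0 := hker _ (by rw [map_sub, h, sub_self])
    exact sub_eq_zero.mp hab
  · intro y
    obtain ⟨m, rfl⟩ := Submodule.mkQ_surjective Mtor y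
    obtain ⟨w, hw⟩ := hetale.2 m
    refine ⟨LinearMap.lTensor (Twist R φ R) Mtor.mkQ w, ?_⟩
    rw [hcomm, hw]
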